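/- Let J be a compact interval, ν ∈ (0,1), and let f : J → ℝ be a three times differentiable map with f(J) ⊆ J and 0 < Df(x) ≤ ν for all x ∈ J. If |Sf(x)| ≤ C for all x ∈ J, then for every k ≥ 1 and every x ∈ J, |Sf^k(x)| ≤ C/(1 − ν²). That is, the Schwarzian derivatives of all iterates of f are uniformly bounded in terms of the bound on Sf and ν. -/

import Mathlib

open Set

private lemma schwarzian_aux
    (a b ν C : ℝ) (hν : ν ∈ Set.Ioo (0:ℝ) 1)
    (f f' f'' f''' : ℝ → ℝ)
    (hmaps : Set.MapsTo f (Set.Icc a b) (Set.Icc a b))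
    (hd1 : ∀ x ∈ Set.Icc a b, HasDerivAt f (f' x) x)
    (hd2 : ∀ x ∈ Set.Icc a b, HasDerivAt f' (f'' x) x)
    (hd3 : ∀ x ∈ Set.Icc a b, HasDerivAt f'' (f''' x) x)
    (hpos : ∀ x ∈ Set.Icc a b, 0 < f' x)
    (hle : ∀ x ∈ Set.Icc a b, f' x ≤ ν)
    (hS : ∀ x ∈ Set.Icc a b,
        |f''' x / f' x - (3/2) * (f'' x / f' x)^2| ≤ C) :
    ∀ k : ℕ, ∃ D2 d3 : ℝ → ℝ,
        (∀ y ∈ Set.Icc a b,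
          HasDerivAt (fun z => ∏ j ∈ Finset.range k, f' (f^[j] z)) (D2 y) y) ∧
        (∀ y ∈ Set.Icc a b, HasDerivAt D2 (d3 y) y) ∧
        (∀ y ∈ Set.Icc a b,
          |d3 y / (∏ j ∈ Finset.range k, f' (f^[j] y))
            - (3/2) * (D2 y / ∏ j ∈ Finset.range k, f' (f^[j] y))^2|
          ≤ C * ∑ j ∈ Finset.range k, (ν^2)^j) := by
  intro k
  induction k with
  | zero =>
    refine ⟨fun _ => 0, fun _ => 0, ?_, ?_, ?_⟩
    · intro y hy; simpa using hasDerivAt_const y (1:ℝ)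
    · intro y hy; exact hasDerivAt_const y 0
    · intro y hy; simp
  | succ k ih =>
    obtain ⟨D2, d3, h1, h2, h3⟩ := ih
    set P : ℝ → ℝ := fun z => ∏ j ∈ Finset.range k, f' (f^[j] z) with hP
    have prod_eq : ∀ z : ℝ, (∏ j ∈ Finset.range (k+1), f' (f^[j] z)) = P (f z) * f' z := by
      intro z
      rw [Finset.prod_range_succ']
      simp [hP, Function.iterate_succ_apply]
    refine ⟨fun z => D2 (f z) * (f' z)^2 + P (f z) * f'' z,
            fun z => d3 (f z) * (f' z)^3 + 3 * D2 (f z) * f'' z * f' z + P (f z) * f''' z,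
            ?_, ?_, ?_⟩
    · intro y hy
      have hfy : f y ∈ Set.Icc a b := hmaps hy
      have hPf : HasDerivAt (fun z => P (f z)) (D2 (f y) * f' y) y :=
        (h1 (f y) hfy).comp y (hd1 y hy)
      have heq : (fun z => ∏ j ∈ Finset.range (k+1), f' (f^[j] z))
          = fun z => P (f z) * f' z := funext prod_eq
      rw [heq]
      have : HasDerivAt (fun z => P (f z) * f' z) _ y := hPf.mul (hd2 y hy)
      convert this using 1
      ring
    · intro y hy
      have hfy : f y ∈ Set.Icc a b := hmaps hy
      have hPf : HasDerivAt (fun z => P (f z)) (D2 (f y) * f' y) y :=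
        (h1 (f y) hfy).comp y (hd1 y hy)
      have hD2f : HasDerivAt (fun z => D2 (f z)) (d3 (f y) * f' y) y :=
        (h2 (f y) hfy).comp y (hd1 y hy)
      have hsq : HasDerivAt (fun z => (f' z)^2) (2 * f' y ^ 1 * f'' y) y :=
        (hd2 y hy).pow 2
      have : HasDerivAt (fun z => D2 (f z) * (f' z)^2 + P (f z) * f'' z) _ y :=
        (hD2f.mul hsq).add (hPf.mul (hd3 y hy))
      convert this using 1
      ring
    · intro y hy
      have hfy : f y ∈ Set.Icc a b := hmaps hy
      have hp : 0 < P (f y) := by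
        apply Finset.prod_pos
        intro j hj
        exact hpos _ ((hmaps.iterate j) hfy)
      have hq : 0 < f' y := hpos y hy
      have hqν : f' y ≤ ν := hle y hy
      rw [prod_eq y]
      have key :
          (d3 (f y) * (f' y)^3 + 3 * D2 (f y) * f'' y * f' y + P (f y) * f''' y)
              / (P (f y) * f' y)
            - 3/2 * ((D2 (f y) * (f' y)^2 + P (f y) * f'' y) / (P (f y) * f' y))^2
          = (d3 (f y) / P (f y) - 3/2 * (D2 (f y) / P (f y))^2) * (f' y)^2
            + (f''' y / f' y - 3/2 * (f'' y / f' y)^2) := by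
        field_simp
        ring
      rw [key]
      have hbound1 := h3 (f y) hfy
      have hbound2 := hS y hy
      have hq2 : (f' y)^2 ≤ ν^2 := by
        apply pow_le_pow_left₀ hq.le hqν
      have hCnn : 0 ≤ C := le_trans (abs_nonneg _) hbound2
      calc |(d3 (f y) / P (f y) - 3/2 * (D2 (f y) / P (f y))^2) * (f' y)^2
            + (f''' y / f' y - 3/2 * (f'' y / f' y)^2)|
          ≤ |d3 (f y) / P (f y) - 3/2 * (D2 (f y) / P (f y))^2| * (f' y)^2
            + |f''' y / f' y - 3/2 * (f'' y / f' y)^2| := by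
            refine (abs_add_le _ _).trans ?_
            rw [abs_mul, abs_pow, abs_of_pos hq]
        _ ≤ (C * ∑ j ∈ Finset.range k, (ν^2)^j) * ν^2 + C := by
            gcongr <;>
              first
                | exact le_trans (abs_nonneg _) hbound1
                | assumption
                | positivity
        _ = C * ∑ j ∈ Finset.range (k+1), (ν^2)^j := by
            rw [geom_sum_succ]
            ring

theorem schwarzian_of_iterates_uniformly_bounded
    (a b ν C : ℝ) (hab : a < b) (hν : ν ∈ Set.Ioo (0:ℝ) 1)
    (f f' f'' f''' : ℝ → ℝ)
    (hmaps : Set.MapsTo f (Set.Icc a b) (Set.Icc a b))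
    (hd1 : ∀ x ∈ Set.Icc a b, HasDerivAt f (f' x) x)
    (hd2 : ∀ x ∈ Set.Icc a b, HasDerivAt f' (f'' x) x)
    (hd3 : ∀ x ∈ Set.Icc a b, HasDerivAt f'' (f''' x) x)
    (hpos : ∀ x ∈ Set.Icc a b, 0 < f' x)
    (hle : ∀ x ∈ Set.Icc a b, f' x ≤ ν)
    (hS : ∀ x ∈ Set.Icc a b,
        |f''' x / f' x - (3/2) * (f'' x / f' x)^2| ≤ C) :
    ∀ k : ℕ, 1 ≤ k → ∀ x ∈ Set.Icc a b,
      ∃ D2 : ℝ → ℝ, ∃ d3 : ℝ,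
        (∀ y ∈ Set.Icc a b,
          HasDerivAt (fun z => ∏ j ∈ Finset.range k, f' (f^[j] z)) (D2 y) y) ∧
        HasDerivAt D2 d3 x ∧
        |d3 / (∏ j ∈ Finset.range k, f' (f^[j] x))
            - (3/2) * (D2 x / ∏ j ∈ Finset.range k, f' (f^[j] x))^2|
          ≤ C / (1 - ν^2) := by
  intro k hk x hx
  obtain ⟨D2, d3, h1, h2, h3⟩ := schwarzian_aux a b ν C hν f f' f'' f''' hmaps
    hd1 hd2 hd3 hpos hle hS k
  refine ⟨D2, d3 x, h1, h2 x hx, ?_⟩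
  refine (h3 x hx).trans ?_
  have hν0 := hν.1
  have hν1 := hν.2
  have hCnn : 0 ≤ C := le_trans (abs_nonneg _) (hS a ⟨le_refl a, hab.le⟩)
  have hr1 : ν^2 < 1 := by nlinarith
  have h1x : 0 < 1 - ν^2 := by nlinarith
  have hgs : ∑ j ∈ Finset.range k, (ν^2)^j ≤ 1 / (1 - ν^2) := by
    rw [geom_sum_eq (by nlinarith : ν^2 ≠ 1)]
    have heq : ((ν^2)^k - 1)/(ν^2 - 1) = (1 - (ν^2)^k)/(1 - ν^2) := by
      rw [div_eq_div_iff (by nlinarith) (by nlinarith)]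
      ring
    rw [heq]
    have hk0 : 0 ≤ (ν^2)^k := by positivity
    gcongr
    nlinarith
  calc C * ∑ j ∈ Finset.range k, (ν^2)^j ≤ C * (1 / (1 - ν^2)) := by gcongr
    _ = C / (1 - ν^2) := by ring
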